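/- Asymptotic preservation under definite integration: for f, g ∈ T^× and s ≠ t in T^{>,≻}, f ≺ g implies ∫_s^t f ≺ ∫_s^t g, and f ∼ g implies ∫_s^t f ∼ ∫_s^t g. -/

import Mathlib

/-- `s ≺ t` relative to the coefficient field `R`. -/
def Prec {T : Type*} [Field T] [LinearOrder T] [IsStrictOrderedRing T] (R : Subfield T) (s t : T) : Prop :=
  ∀ r ∈ R, 0 < r → r * |s| < |t|

/-- `s` is positive infinite: `s > R`. -/
def PosInf {T : Type*} [Field T] [LinearOrder T] [IsStrictOrderedRing T] (R : Subfield T) (s : T) : Prop :=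
  ∀ r ∈ R, r < s

/-- asymptotic relations are preserved by definite integration:
for `f, g ≠ 0` and positive infinite `s ≠ t`, `f ≺ g` implies
`∫_s^t f ≺ ∫_s^t g`, and `f ∼ g` implies `∫_s^t f ∼ ∫_s^t g`,
where `∫_s^t f := (∫f)∘t − (∫f)∘s`. -/
theorem integral_preserves_asymptotics (T : Type*) [Field T] [LinearOrder T] [IsStrictOrderedRing T]
    (R : Subfield T) (d : T → T) (comp : T → T → T) (x : T) (Int : T → T)
    (hd_add : ∀ a b : T, d (a + b) = d a + d b)
    (hd_mul : ∀ a b : T, d (a * b) = d a * b + a * d b)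
    (hd_ker : ∀ a : T, d a = 0 ↔ a ∈ R)
    (hH : ∀ f : T, PosInf R f → 0 < d f)
    (hx : PosInf R x)
    (comp_add : ∀ f g s : T, PosInf R s → comp (f + g) s = comp f s + comp g s)
    (comp_mul : ∀ f g s : T, PosInf R s → comp (f * g) s = comp f s * comp g s)
    (comp_strictMono_left : ∀ s : T, PosInf R s → StrictMono (fun f => comp f s))
    (comp_id_left : ∀ s : T, PosInf R s → comp x s = s)
    (comp_id_right : ∀ f : T, comp f x = f)
    (chain_rule : ∀ f s : T, PosInf R s → d (comp f s) = d s * comp (d f) s)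
    (hmono : ∀ f : T, f ∉ (R : Set T) → ∀ s t : T, PosInf R s → PosInf R t →
      s < t → (0 < d f → comp f s < comp f t) ∧ (d f < 0 → comp f t < comp f s))
    (hInt : ∀ f : T, d (Int f) = f)
    (f g s t : T) (hf : f ≠ 0) (hg : g ≠ 0)
    (hs : PosInf R s) (ht : PosInf R t) (hst : s ≠ t) :
    (Prec R f g →
      Prec R (comp (Int f) t - comp (Int f) s) (comp (Int g) t - comp (Int g) s)) ∧
    (Prec R (f - g) f →
      Prec R ((comp (Int f) t - comp (Int f) s) - (comp (Int g) t - comp (Int g) s))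
        (comp (Int f) t - comp (Int f) s)) := by
  -- basic positivity
  have hpos : ∀ u : T, PosInf R u → 0 < u := fun u hu => hu 0 R.zero_mem
  have d_const : ∀ c : T, c ∈ R → d c = 0 := fun c hc => (hd_ker c).mpr hc
  have d_zero : d 0 = 0 := d_const 0 R.zero_mem
  have d_neg : ∀ a : T, d (-a) = - d a := by
    intro a
    have h := hd_add a (-a)
    rw [add_neg_cancel, d_zero] at h
    linarith
  have d_sub : ∀ a b : T, d (a - b) = d a - d b := by
    intro a b
    rw [sub_eq_add_neg, hd_add, d_neg]; ring
  have d_smul : ∀ c ∈ R, ∀ a : T, d (c * a) = c * d a := by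
    intro c hc a
    rw [hd_mul, d_const c hc]; ring
  have notR : ∀ a : T, d a ≠ 0 → a ∉ (R : Set T) := fun a hda hm => hda ((hd_ker a).mpr hm)
  have comp_zero : ∀ u : T, PosInf R u → comp 0 u = 0 := by
    intro u hu
    have h := comp_add 0 0 u hu
    rw [add_zero] at h
    linarith
  have comp_neg : ∀ a u : T, PosInf R u → comp (-a) u = - comp a u := by
    intro a u hu
    have h := comp_add a (-a) u hu
    rw [add_neg_cancel, comp_zero u hu] at h
    linarith
  have comp_sub : ∀ a b u : T, PosInf R u → comp (a - b) u = comp a u - comp b u := by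
    intro a b u hu
    rw [sub_eq_add_neg, comp_add _ _ _ hu, comp_neg _ _ hu]; ring
  have comp_one : ∀ u : T, PosInf R u → comp 1 u = 1 := by
    intro u hu
    have h := comp_mul 1 1 u hu
    rw [one_mul] at h
    have hpos1 : 0 < comp 1 u := by
      have h2 := comp_strictMono_left u hu (show (0:T) < 1 by norm_num)
      simpa [comp_zero u hu] using h2
    have h3 : comp 1 u * 1 = comp 1 u * comp 1 u := by rw [mul_one]; exact h
    have := mul_left_cancel₀ (ne_of_gt hpos1) h3
    linarith
  have hx_pos : 0 < x := hpos x hx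
  have hx_ne : x ≠ 0 := ne_of_gt hx_pos
  have comp_invx : ∀ u : T, PosInf R u → comp x⁻¹ u = u⁻¹ := by
    intro u hu
    have h := comp_mul x x⁻¹ u hu
    rw [mul_inv_cancel₀ hx_ne, comp_one u hu, comp_id_left u hu] at h
    exact eq_inv_of_mul_eq_one_right h.symm
  have hdx : 0 < d x := hH x hx
  have hinv2 : 0 < d x * (x⁻¹ * x⁻¹) :=
    mul_pos hdx (mul_pos (inv_pos.mpr hx_pos) (inv_pos.mpr hx_pos))
  have d_invx : d x⁻¹ = -(d x * (x⁻¹ * x⁻¹)) := by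
    have h := hd_mul x x⁻¹
    rw [mul_inv_cancel₀ hx_ne, d_const 1 R.one_mem] at h
    have h2 : x * d x⁻¹ = -(d x * x⁻¹) := by linarith
    calc d x⁻¹ = x⁻¹ * (x * d x⁻¹) := by rw [← mul_assoc, inv_mul_cancel₀ hx_ne, one_mul]
    _ = x⁻¹ * (-(d x * x⁻¹)) := by rw [h2]
    _ = -(d x * (x⁻¹ * x⁻¹)) := by ring
  have comp_mem : ∀ c ∈ R, ∀ u : T, PosInf R u → comp c u ∈ R := by
    intro c hc u hu
    have h := chain_rule c u hu
    rw [d_const c hc, comp_zero u hu, mul_zero] at h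
    exact (hd_ker _).mp h
  have close : ∀ c ∈ R, ∀ u v : T, PosInf R u → PosInf R v → u < v →
      |comp c u - comp c v| < u⁻¹ := by
    intro c hc u v hu hv huv
    have hiv : 0 < v⁻¹ := inv_pos.mpr (hpos v hv)
    have hd1 : d (c - x⁻¹) = d x * (x⁻¹ * x⁻¹) := by
      rw [d_sub, d_const c hc, d_invx]; ring
    have h1 := (hmono (c - x⁻¹) (notR _ (by rw [hd1]; exact ne_of_gt hinv2)) u v hu hv huv).1
      (by rw [hd1]; exact hinv2)
    rw [comp_sub _ _ _ hu, comp_sub _ _ _ hv, comp_invx u hu, comp_invx v hv] at h1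
    have hd2 : d (c + x⁻¹) = -(d x * (x⁻¹ * x⁻¹)) := by
      rw [hd_add, d_const c hc, d_invx]; ring
    have h2 := (hmono (c + x⁻¹) (notR _ (by rw [hd2]; exact ne_of_lt (neg_lt_zero.mpr hinv2)))
      u v hu hv huv).2 (by rw [hd2]; exact neg_lt_zero.mpr hinv2)
    rw [comp_add _ _ _ hu, comp_add _ _ _ hv, comp_invx u hu, comp_invx v hv] at h2
    rw [abs_sub_lt_iff]
    constructor <;> linarith
  have squeeze : ∀ y : T, y ∈ R → ∀ m : T, PosInf R m → |y| < m⁻¹ → y = 0 := by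
    intro y hy m hm hlt
    by_contra hne
    have habs : |y| ∈ R := by
      rcases abs_choice y with h | h
      · rw [h]; exact hy
      · rw [h]; exact R.neg_mem hy
    have hpos' : 0 < |y| := abs_pos.mpr hne
    have h1 : |y|⁻¹ < m := hm _ (R.inv_mem habs)
    have hm0 : 0 < m := hpos m hm
    have hcontra : (1:T) < 1 := by
      calc (1:T) = |y| * |y|⁻¹ := (mul_inv_cancel₀ (ne_of_gt hpos')).symm
      _ < |y| * m := mul_lt_mul_of_pos_left h1 hpos'
      _ < m⁻¹ * m := mul_lt_mul_of_pos_right hlt hm0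
      _ = 1 := inv_mul_cancel₀ (ne_of_gt hm0)
    exact absurd hcontra (lt_irrefl 1)
  have comp_const : ∀ c ∈ R, ∀ u : T, PosInf R u → comp c u = c := by
    intro c hc u hu
    rcases lt_trichotomy u x with h | h | h
    · have hcl := close c hc u x hu hx h
      rw [comp_id_right c] at hcl
      have hmem : comp c u - c ∈ R := R.sub_mem (comp_mem c hc u hu) hc
      have h0 := squeeze _ hmem u hu hcl
      linarith [sub_eq_zero.mp h0]
    · rw [h, comp_id_right]
    · have hcl := close c hc x u hx hu h
      rw [comp_id_right c] at hcl
      have hmem : c - comp c u ∈ R := R.sub_mem hc (comp_mem c hc u hu)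
      have h0 := squeeze _ hmem x hx hcl
      linarith [sub_eq_zero.mp h0]
  have comp_smul : ∀ c ∈ R, ∀ a u : T, PosInf R u → comp (c * a) u = c * comp a u := by
    intro c hc a u hu
    rw [comp_mul _ _ _ hu, comp_const c hc u hu]
  have mono : ∀ a : T, 0 < d a → ∀ u v : T, PosInf R u → PosInf R v → u < v →
      comp a u < comp a v := fun a ha u v hu hv huv =>
    (hmono a (notR a (ne_of_gt ha)) u v hu hv huv).1 ha
  have shift : ∀ a b : T, d a = d b → ∀ u v : T, PosInf R u → PosInf R v →
      comp a v - comp a u = comp b v - comp b u := by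
    intro a b hab u v hu hv
    have hmem : a - b ∈ R := (hd_ker _).mp (by rw [d_sub, hab, sub_self])
    have e : ∀ w : T, PosInf R w → comp a w = comp b w + (a - b) := by
      intro w hw
      conv_lhs => rw [show a = b + (a - b) by ring]
      rw [comp_add _ _ _ hw, comp_const _ hmem w hw]
    rw [e u hu, e v hv]; ring
  -- key lemma for ordered points
  have K : ∀ u v : T, PosInf R u → PosInf R v → u < v → ∀ h k : T,
      (∀ ρ ∈ R, 0 < ρ → ρ * |h| < |k|) → ∀ r ∈ R, 0 < r →
      r * |comp (Int h) v - comp (Int h) u| < |comp (Int k) v - comp (Int k) u| := by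
    intro u v hu hv huv h k hhk r hr hr0
    have Jpos : ∀ a : T, 0 < a → 0 < comp (Int a) v - comp (Int a) u := by
      intro a ha
      have hda : 0 < d (Int a) := by rw [hInt]; exact ha
      linarith [mono (Int a) hda u v hu hv huv]
    have hk' : 0 < |k| := by
      have h1 := hhk 1 R.one_mem one_pos
      have h2 := abs_nonneg h
      linarith
    have hrh : -|k| < r * h ∧ r * h < |k| := by
      have h1 := hhk r hr hr0
      have h2 : |r * h| < |k| := by rw [abs_mul, abs_of_pos hr0]; exact h1
      exact abs_lt.mp h2
    have expand : ∀ ρ ∈ R, ∀ a : T,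
        comp (Int (|k| + ρ * a)) v - comp (Int (|k| + ρ * a)) u
          = (comp (Int |k|) v - comp (Int |k|) u)
            + ρ * (comp (Int a) v - comp (Int a) u) := by
      intro ρ hρ a
      have hd : d (Int (|k| + ρ * a)) = d (Int |k| + ρ * Int a) := by
        rw [hd_add, d_smul ρ hρ]; simp [hInt]
      rw [shift _ _ hd u v hu hv, comp_add _ _ _ hu, comp_add _ _ _ hv,
        comp_smul ρ hρ _ _ hu, comp_smul ρ hρ _ _ hv]
      ring
    have e1 : 0 < comp (Int (|k| + (-r) * h)) v - comp (Int (|k| + (-r) * h)) u :=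
      Jpos _ (by nlinarith [hrh.2])
    have e2 : 0 < comp (Int (|k| + r * h)) v - comp (Int (|k| + r * h)) u :=
      Jpos _ (by nlinarith [hrh.1])
    rw [expand (-r) (R.neg_mem hr) h] at e1
    rw [expand r hr h] at e2
    have hJk' : 0 < comp (Int |k|) v - comp (Int |k|) u := Jpos _ hk'
    have habs : r * |comp (Int h) v - comp (Int h) u|
        < comp (Int |k|) v - comp (Int |k|) u := by
      rw [← abs_of_pos hr0, ← abs_mul, abs_lt]
      constructor <;> nlinarith [e1, e2]
    have hkne : k ≠ 0 := by
      intro h0; rw [h0, abs_zero] at hk'; exact lt_irrefl 0 hk'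
    have hfinal : |comp (Int k) v - comp (Int k) u|
        = comp (Int |k|) v - comp (Int |k|) u := by
      rcases hkne.lt_or_gt with hk0 | hk0
      · have hdd : d (Int (-k)) = d (-(Int k)) := by rw [d_neg]; simp [hInt]
        have hsft := shift _ _ hdd u v hu hv
        rw [comp_neg _ _ hu, comp_neg _ _ hv] at hsft
        rw [abs_of_neg hk0] at hJk' ⊢
        rw [hsft] at hJk' ⊢
        rw [abs_of_neg (show comp (Int k) v - comp (Int k) u < 0 by linarith)]
        ring
      · rw [abs_of_pos hk0] at hJk' ⊢
        exact abs_of_pos hJk'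
    rw [hfinal]
    exact habs
  have main : ∀ h k : T, (∀ ρ ∈ R, 0 < ρ → ρ * |h| < |k|) →
      Prec R (comp (Int h) t - comp (Int h) s) (comp (Int k) t - comp (Int k) s) := by
    intro h k hhk r hr hr0
    rcases lt_trichotomy s t with hlt | heq | hgt
    · exact K s t hs ht hlt h k hhk r hr hr0
    · exact absurd heq hst
    · have h1 := K t s ht hs hgt h k hhk r hr hr0
      rw [abs_sub_comm (comp (Int h) s), abs_sub_comm (comp (Int k) s)] at h1
      exact h1
  constructor
  · intro hfg
    exact main f g hfg
  · intro hfg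
    have heq2 : comp (Int (f - g)) t - comp (Int (f - g)) s
        = (comp (Int f) t - comp (Int f) s) - (comp (Int g) t - comp (Int g) s) := by
      have hd : d (Int (f - g)) = d (Int f - Int g) := by rw [d_sub]; simp [hInt]
      rw [shift _ _ hd s t hs ht, comp_sub _ _ _ hs, comp_sub _ _ _ ht]
      ring
    have hmain := main (f - g) f hfg
    rw [← heq2]
    exact hmain
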